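/- For commuting operators T_1, T_2 on a Hilbert space H with T_1 T_2 = T_2 T_1 and T_1 T_1* + T_2 T_2* ≤ I, and n ≥ 1, define S_k = binom(n,k)^{1/2} · T_1^k T_2^{n-k} for 0 ≤ k ≤ n. Then ∑_{k=0}^n S_k S_k* ≤ I. -/

import Mathlib

open ContinuousLinearMap in
theorem aux_key {H : Type*} [NormedAddCommGroup H] [InnerProductSpace ℂ H] [CompleteSpace H]
    (T₁ T₂ : H →L[ℂ] H) (hcomm : T₁ * T₂ = T₂ * T₁)
    (hrow : ContinuousLinearMap.IsPositive
      ((1 : H →L[ℂ] H) - (T₁ * star T₁ + T₂ * star T₂))) (n : ℕ) :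
    ContinuousLinearMap.IsPositive ((1 : H →L[ℂ] H) -
      ∑ k ∈ Finset.range (n + 1),
        ((n.choose k : ℂ)) • ((T₁ ^ k * T₂ ^ (n - k)) * star (T₁ ^ k * T₂ ^ (n - k)))) := by
  induction n with
  | zero => simp [ContinuousLinearMap.isPositive_zero]
  | succ n ih =>
    set Q : H →L[ℂ] H := ∑ k ∈ Finset.range (n + 1),
        ((n.choose k : ℂ)) • ((T₁ ^ k * T₂ ^ (n - k)) * star (T₁ ^ k * T₂ ^ (n - k))) with hQ
    have hrec : (∑ k ∈ Finset.range (n + 2),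
        (((n+1).choose k : ℂ)) • ((T₁ ^ k * T₂ ^ (n + 1 - k)) * star (T₁ ^ k * T₂ ^ (n + 1 - k))))
        = T₁ * Q * star T₁ + T₂ * Q * star T₂ := by
      have hc : ∀ k, T₂ * T₁ ^ k = T₁ ^ k * T₂ := fun k =>
        ((show Commute T₂ T₁ from hcomm.symm).pow_right k).eq
      have conj : ∀ (S A : H →L[ℂ] H) (c : ℂ),
          S * (c • (A * star A)) * star S = c • ((S * A) * star (S * A)) := by
        intro S A c
        rw [mul_smul_comm, smul_mul_assoc]
        congr 1
        rw [star_mul]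
        simp only [mul_assoc]
      set g : ℕ → (H →L[ℂ] H) := fun j =>
        (T₁ ^ j * T₂ ^ (n + 1 - j)) * star (T₁ ^ j * T₂ ^ (n + 1 - j)) with hg
      have h1 : T₁ * Q * star T₁ =
          ∑ k ∈ Finset.range (n + 1), ((n.choose k : ℂ)) • g (k + 1) := by
        rw [hQ, Finset.mul_sum, Finset.sum_mul]
        refine Finset.sum_congr rfl fun k hk => ?_
        rw [conj]
        simp only [hg]
        have e : n + 1 - (k + 1) = n - k := by omega
        have e2 : T₁ * (T₁ ^ k * T₂ ^ (n - k)) = T₁ ^ (k + 1) * T₂ ^ (n + 1 - (k + 1)) := by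
          rw [e, pow_succ', mul_assoc]
        rw [e2]
      have h2 : T₂ * Q * star T₂ =
          ∑ k ∈ Finset.range (n + 1), ((n.choose k : ℂ)) • g k := by
        rw [hQ, Finset.mul_sum, Finset.sum_mul]
        refine Finset.sum_congr rfl fun k hk => ?_
        rw [conj]
        simp only [hg]
        have hk' : k ≤ n := Nat.lt_succ_iff.mp (Finset.mem_range.mp hk)
        have e : n + 1 - k = (n - k) + 1 := by omega
        have e2 : T₂ * (T₁ ^ k * T₂ ^ (n - k)) = T₁ ^ k * T₂ ^ (n + 1 - k) := by
          rw [← mul_assoc, hc k, mul_assoc, ← pow_succ', ← e]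
        rw [e2]
      have hsum : ∀ k, ((n + 1).choose k : ℂ) • (T₁ ^ k * T₂ ^ (n + 1 - k) *
          star (T₁ ^ k * T₂ ^ (n + 1 - k))) = ((n + 1).choose k : ℂ) • g k := fun k => rfl
      simp only [hsum, h1, h2]
      have e1 : ∑ k ∈ Finset.range (n + 2), ((n.choose k : ℂ)) • g k
          = ∑ k ∈ Finset.range (n + 1), ((n.choose k : ℂ)) • g k := by
        rw [Finset.sum_range_succ, Nat.choose_succ_self]
        simp
      rw [← e1, Finset.sum_range_succ' _ (n + 1), Finset.sum_range_succ' _ (n + 1)]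
      simp only [Nat.choose_succ_succ, Nat.cast_add, add_smul, Finset.sum_add_distrib,
        Nat.choose_zero_right, Nat.cast_one]
      abel
    have key : (1 : H →L[ℂ] H) - ∑ k ∈ Finset.range (n + 2),
        (((n+1).choose k : ℂ)) • ((T₁ ^ k * T₂ ^ (n + 1 - k)) * star (T₁ ^ k * T₂ ^ (n + 1 - k)))
        = ((1 : H →L[ℂ] H) - (T₁ * star T₁ + T₂ * star T₂))
          + (T₁ * ((1 : H →L[ℂ] H) - Q) * star T₁ + T₂ * ((1 : H →L[ℂ] H) - Q) * star T₂) := by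
      rw [hrec]; noncomm_ring
    rw [key]
    refine hrow.add (ContinuousLinearMap.IsPositive.add ?_ ?_)
    · simpa [ContinuousLinearMap.star_eq_adjoint, ContinuousLinearMap.mul_def,
        ContinuousLinearMap.comp_assoc] using
        ih.conj_adjoint T₁
    · simpa [ContinuousLinearMap.star_eq_adjoint, ContinuousLinearMap.mul_def,
        ContinuousLinearMap.comp_assoc] using
        ih.conj_adjoint T₂

/-- For commuting operators `T₁, T₂` on a Hilbert space with
`T₁T₁* + T₂T₂* ≤ I`, and `n ≥ 1`, the operators
`S_k = binom(n,k)^{1/2} T₁^k T₂^{n-k}` (`0 ≤ k ≤ n`) satisfy `∑ₖ S_k S_k* ≤ I`.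
(The operator order `A ≤ B` is expressed as `(B - A).IsPositive`.) -/
theorem stmt8 {H : Type*} [NormedAddCommGroup H] [InnerProductSpace ℂ H] [CompleteSpace H]
    (T₁ T₂ : H →L[ℂ] H) (hcomm : T₁ * T₂ = T₂ * T₁)
    (hrow : ContinuousLinearMap.IsPositive
      ((1 : H →L[ℂ] H) - (T₁ * star T₁ + T₂ * star T₂)))
    (n : ℕ) (hn : 1 ≤ n) :
    ContinuousLinearMap.IsPositive ((1 : H →L[ℂ] H) -
      ∑ k ∈ Finset.range (n + 1),
        ((Real.sqrt (n.choose k) : ℂ) • (T₁ ^ k * T₂ ^ (n - k))) *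
          star ((Real.sqrt (n.choose k) : ℂ) • (T₁ ^ k * T₂ ^ (n - k)))) := by
  have h := aux_key T₁ T₂ hcomm hrow n
  have e : ∀ k, ((Real.sqrt (n.choose k) : ℂ) • (T₁ ^ k * T₂ ^ (n - k))) *
      star ((Real.sqrt (n.choose k) : ℂ) • (T₁ ^ k * T₂ ^ (n - k)))
      = ((n.choose k : ℂ)) • ((T₁ ^ k * T₂ ^ (n - k)) * star (T₁ ^ k * T₂ ^ (n - k))) := by
    intro k
    rw [star_smul, smul_mul_smul_comm]
    congr 1
    rw [Complex.star_def, Complex.conj_ofReal, ← Complex.ofReal_mul,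
      Real.mul_self_sqrt (Nat.cast_nonneg _)]
    simp
  simp only [e]
  exact h
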